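/- Let G be a finitely generated group and μ a symmetric probability measure on G. Suppose that for each r ≥ 1 there is a finite subset K(r) ⊆ G such that: (i) for all g ∈ K(r) and all finitely supported f : G → ℝ, Σ_x |f(xg) − f(x)|² ≤ C_0 r E_μ(f,f), where E_μ(f,f) = (1/2)Σ_{x,y}|f(xy) − f(x)|²μ(y); and (ii) #K(r) ≥ v(r) for an increasing function v. Then for every finitely supported f and every r ≥ 1, ‖f‖_2² ≤ 2C_0 r E_μ(f,f) + 2 v(r)^{-1} ‖f‖_1². -/

import Mathlib

/-- The Dirichlet form `E_μ(f,f) = (1/2) Σ_{x,y} |f(xy) − f(x)|² μ(y)`. -/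
noncomputable def muDirichletForm {G : Type*} [Group G] (μ : G → ℝ) (f : G → ℝ) : ℝ :=
  (1 / 2) * ∑' p : G × G, (f (p.1 * p.2) - f p.1) ^ 2 * μ p.2

private lemma sq_split (a b : ℝ) : a ^ 2 ≤ 2 * (a - b) ^ 2 + 2 * b ^ 2 := by
  nlinarith [sq_nonneg (a - 2 * b)]

/-- Nash-type inequality from pseudo-Poincaré inequality and
volume.  Let `G` be a finitely generated group and `μ` a symmetric probability
measure on `G`.  Suppose that for each `r ≥ 1` there is a finite set
`K(r) ⊆ G` such that (i) for all `g ∈ K(r)` and all finitely supported `f`,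
`Σ_x |f(xg) − f(x)|² ≤ C₀ r E_μ(f,f)`, and (ii) `#K(r) ≥ v(r)` with `v`
increasing (and positive).  Then for every finitely supported `f` and `r ≥ 1`,
`‖f‖₂² ≤ 2 C₀ r E_μ(f,f) + 2 v(r)⁻¹ ‖f‖₁²`. -/
theorem statement5 {G : Type} [Group G] [Countable G]
    (hfg : ∃ A : Finset G, Subgroup.closure (A : Set G) = ⊤)
    (μ : G → ℝ) (hμ0 : ∀ g, 0 ≤ μ g) (hμsym : ∀ g, μ g⁻¹ = μ g)
    (hμ1 : ∑' g : G, μ g = 1)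
    (C₀ : ℝ) (hC₀ : 0 < C₀)
    (K : ℝ → Finset G)
    (v : ℝ → ℝ) (hv : MonotoneOn v (Set.Ici 1)) (hvpos : ∀ r : ℝ, 1 ≤ r → 0 < v r)
    (hPP : ∀ r : ℝ, 1 ≤ r → ∀ g ∈ K r, ∀ f : G → ℝ, (Function.support f).Finite →
      (∑' x : G, (f (x * g) - f x) ^ 2) ≤ C₀ * r * muDirichletForm μ f)
    (hVol : ∀ r : ℝ, 1 ≤ r → v r ≤ (K r).card) :
    ∀ f : G → ℝ, (Function.support f).Finite → ∀ r : ℝ, 1 ≤ r →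
      (∑' x : G, (f x) ^ 2) ≤
        2 * C₀ * r * muDirichletForm μ f + 2 * (v r)⁻¹ * (∑' x : G, |f x|) ^ 2 := by
  intro f hf r hr
  classical
  set Kr := K r with hKr
  have hcard : (0 : ℝ) < (Kr.card : ℝ) := lt_of_lt_of_le (hvpos r hr) (hVol r hr)
  set N : ℝ := (Kr.card : ℝ) with hN
  set T : Finset G := hf.toFinset with hT
  set S : Finset G := T ∪ Kr.biUnion (fun g => T.image (· * g⁻¹)) with hS
  have hfS : ∀ x ∉ S, f x = 0 := by
    intro x hx
    by_contra h
    refine hx (Finset.mem_union_left _ ?_)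
    rw [hT, Set.Finite.mem_toFinset]
    exact h
  have hgS : ∀ g ∈ Kr, ∀ x ∉ S, f (x * g) = 0 := by
    intro g hg x hx
    by_contra h
    apply hx
    refine Finset.mem_union_right _ (Finset.mem_biUnion.2
      ⟨g, hg, Finset.mem_image.2 ⟨x * g, ?_, by group⟩⟩)
    rw [hT, Set.Finite.mem_toFinset]
    exact h
  set F : G → ℝ := fun x => (∑ g ∈ Kr, f (x * g)) / N with hF
  have hFS : ∀ x ∉ S, F x = 0 := by
    intro x hx
    simp [hF, Finset.sum_eq_zero (fun g hg => hgS g hg x hx)]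
  set L1 : ℝ := ∑' x : G, |f x| with hL1
  have habs_summable : Summable (fun x : G => |f x|) :=
    summable_of_finite_support (Set.Finite.subset hf (fun x hx => by simpa using hx))
  have hL1_nonneg : 0 ≤ L1 := tsum_nonneg (fun x => abs_nonneg _)
  -- tsum of f^2 equals finite sum over S
  have h2sum : (∑' x : G, (f x) ^ 2) = ∑ x ∈ S, (f x) ^ 2 := by
    refine tsum_eq_sum ?_
    intro x hx; rw [hfS x hx]; ring
  have h1sum : L1 = ∑ x ∈ S, |f x| := by
    refine tsum_eq_sum ?_
    intro x hx; rw [hfS x hx]; simp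
  -- Step B bound per g : finite sum over S ≤ C₀ r E
  have hE := muDirichletForm μ f
  have hPPg : ∀ g ∈ Kr, (∑ x ∈ S, (f (x * g) - f x) ^ 2) ≤ C₀ * r * muDirichletForm μ f := by
    intro g hg
    have hsupp : (Function.support (fun x : G => (f (x * g) - f x) ^ 2)).Finite := by
      apply Set.Finite.subset S.finite_toSet
      intro x hx
      by_contra hxS
      apply hx
      simp [hgS g hg x hxS, hfS x hxS]
    have hsummable : Summable (fun x : G => (f (x * g) - f x) ^ 2) :=
      summable_of_finite_support hsupp
    calc (∑ x ∈ S, (f (x * g) - f x) ^ 2) ≤ ∑' x : G, (f (x * g) - f x) ^ 2 :=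
          Summable.sum_le_tsum S (fun x _ => by positivity) hsummable
      _ ≤ C₀ * r * muDirichletForm μ f := hPP r hr g hg f hf
  -- Step B : ∑_S (f - F)^2 ≤ C₀ r E
  have stepB : (∑ x ∈ S, (f x - F x) ^ 2) ≤ C₀ * r * muDirichletForm μ f := by
    have pointwise : ∀ x : G, (f x - F x) ^ 2 ≤ (∑ g ∈ Kr, (f (x * g) - f x) ^ 2) / N := by
      intro x
      have h1 : f x - F x = (∑ g ∈ Kr, (f x - f (x * g))) / N := by
        simp only [hF]
        rw [Finset.sum_sub_distrib, Finset.sum_const, nsmul_eq_mul, ← hN, sub_div,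
          mul_div_cancel_left₀ _ (ne_of_gt hcard)]
      rw [h1, div_pow]
      rw [div_le_div_iff₀ (by positivity) hcard]
      have hcs : (∑ g ∈ Kr, (f x - f (x * g))) ^ 2 ≤
          (Kr.card : ℝ) * ∑ g ∈ Kr, (f x - f (x * g)) ^ 2 := sq_sum_le_card_mul_sum_sq
      calc (∑ g ∈ Kr, (f x - f (x * g))) ^ 2 * N
          ≤ ((Kr.card : ℝ) * ∑ g ∈ Kr, (f x - f (x * g)) ^ 2) * N :=
            mul_le_mul_of_nonneg_right hcs (le_of_lt hcard)
        _ = (∑ g ∈ Kr, (f (x * g) - f x) ^ 2) * N ^ 2 := by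
            rw [hN]
            have : ∀ g, (f x - f (x * g)) ^ 2 = (f (x * g) - f x) ^ 2 := fun g => by ring
            simp_rw [this]
            ring
    calc (∑ x ∈ S, (f x - F x) ^ 2)
        ≤ ∑ x ∈ S, (∑ g ∈ Kr, (f (x * g) - f x) ^ 2) / N :=
          Finset.sum_le_sum (fun x _ => pointwise x)
      _ = (∑ g ∈ Kr, ∑ x ∈ S, (f (x * g) - f x) ^ 2) / N := by
          rw [← Finset.sum_div, Finset.sum_comm]
      _ ≤ (∑ g ∈ Kr, C₀ * r * muDirichletForm μ f) / N := by
          gcongr with g hg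
          exact hPPg g hg
      _ = C₀ * r * muDirichletForm μ f := by
          rw [Finset.sum_const, nsmul_eq_mul, ← hN]
          field_simp
  -- Step C : ∑_S F^2 ≤ L1^2 / N
  have habs1 : ∀ x : G, ∑ g ∈ Kr, |f (x * g)| ≤ L1 := by
    intro x
    have hinj : Set.InjOn (fun g => x * g) Kr := fun a _ b _ h => mul_left_cancel h
    rw [← Finset.sum_image (f := fun y => |f y|) (g := fun g => x * g)
      (fun a ha b hb h => hinj ha hb h)]
    exact Summable.sum_le_tsum _ (fun y _ => abs_nonneg _) habs_summable
  have habs2 : ∀ g ∈ Kr, ∑ x ∈ S, |f (x * g)| ≤ L1 := by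
    intro g hg
    have : ∑ x ∈ S, |f (x * g)| = ∑ y ∈ S.image (fun x => x * g), |f y| := by
      rw [Finset.sum_image (fun a ha b hb h => mul_right_cancel h)]
    rw [this]
    exact Summable.sum_le_tsum _ (fun y _ => abs_nonneg _) habs_summable
  have stepC : (∑ x ∈ S, (F x) ^ 2) ≤ L1 ^ 2 / N := by
    have hFabs : ∀ x : G, |F x| ≤ (∑ g ∈ Kr, |f (x * g)|) / N := by
      intro x
      rw [hF, abs_div, abs_of_pos hcard]
      gcongr
      exact Finset.abs_sum_le_sum_abs _ _
    have pointwise : ∀ x : G, (F x) ^ 2 ≤ (L1 / N) * ((∑ g ∈ Kr, |f (x * g)|) / N) := by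
      intro x
      have h1 : (F x) ^ 2 = |F x| * |F x| := by rw [← abs_mul, abs_mul_self]; ring
      rw [h1]
      have hb1 : |F x| ≤ L1 / N :=
        le_trans (hFabs x) (by gcongr; exact habs1 x)
      exact mul_le_mul hb1 (hFabs x) (abs_nonneg _)
        (div_nonneg hL1_nonneg (le_of_lt hcard))
    calc (∑ x ∈ S, (F x) ^ 2)
        ≤ ∑ x ∈ S, (L1 / N) * ((∑ g ∈ Kr, |f (x * g)|) / N) :=
          Finset.sum_le_sum (fun x _ => pointwise x)
      _ = (L1 / (N * N)) * ∑ x ∈ S, ∑ g ∈ Kr, |f (x * g)| := by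
          rw [Finset.mul_sum]
          exact Finset.sum_congr rfl fun x _ => by ring
      _ = (L1 / (N * N)) * ∑ g ∈ Kr, ∑ x ∈ S, |f (x * g)| := by
          rw [Finset.sum_comm]
      _ ≤ (L1 / (N * N)) * ∑ g ∈ Kr, L1 :=
          mul_le_mul_of_nonneg_left (Finset.sum_le_sum habs2)
            (div_nonneg hL1_nonneg (by positivity))
      _ = L1 ^ 2 / N := by
          rw [Finset.sum_const, nsmul_eq_mul, ← hN]
          field_simp
  -- Assemble
  have hsplit : (∑ x ∈ S, (f x) ^ 2) ≤
      2 * (∑ x ∈ S, (f x - F x) ^ 2) + 2 * (∑ x ∈ S, (F x) ^ 2) := by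
    calc (∑ x ∈ S, (f x) ^ 2)
        ≤ ∑ x ∈ S, (2 * (f x - F x) ^ 2 + 2 * (F x) ^ 2) :=
          Finset.sum_le_sum (fun x _ => sq_split (f x) (F x))
      _ = 2 * (∑ x ∈ S, (f x - F x) ^ 2) + 2 * (∑ x ∈ S, (F x) ^ 2) := by
          rw [Finset.sum_add_distrib, Finset.mul_sum, Finset.mul_sum]
  have hinvN : L1 ^ 2 / N ≤ (v r)⁻¹ * L1 ^ 2 := by
    rw [div_eq_mul_inv, mul_comm]
    apply mul_le_mul_of_nonneg_right _ (sq_nonneg _)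
    exact inv_anti₀ (hvpos r hr) (hVol r hr)
  rw [h2sum]
  calc (∑ x ∈ S, (f x) ^ 2)
      ≤ 2 * (∑ x ∈ S, (f x - F x) ^ 2) + 2 * (∑ x ∈ S, (F x) ^ 2) := hsplit
    _ ≤ 2 * (C₀ * r * muDirichletForm μ f) + 2 * (L1 ^ 2 / N) :=
        add_le_add (mul_le_mul_of_nonneg_left stepB (by norm_num))
          (mul_le_mul_of_nonneg_left stepC (by norm_num))
    _ ≤ 2 * C₀ * r * muDirichletForm μ f + 2 * (v r)⁻¹ * L1 ^ 2 := by
        have h2 : 2 * (L1 ^ 2 / N) ≤ 2 * ((v r)⁻¹ * L1 ^ 2) :=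
          mul_le_mul_of_nonneg_left hinvN (by norm_num)
        linarith
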